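/- Let A and B be non-empty finite words over a finite alphabet such that AB ≠ BA (equivalently, A and B are not both powers of a common word). Then there exists a word u of length strictly less than |A| + |B| such that: for every word x that is a concatenation of words from {A,B} whose first block is A, and every word y that is a concatenation of words from {A,B} whose first block is B, (i) if |x| ≥ |u| then u is a prefix of x, and if |y| ≥ |u| then u is a prefix of y; and (ii) if |x| > |u| and |y| > |u| then the letters of x and y at position |u| (0-indexed) are different. -/

import Mathlib

open Filter Topology
open scoped ENNReal

section Defs

variable {A B C : Type*}

/-- The shift of a two-sided sequence by `k`. -/
def shiftBy (k : ℤ) (x : ℤ → A) : ℤ → A := fun n => x (n + k)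

/-- The finite word `x_m x_{m+1} ⋯ x_{m+len-1}` read in the two-sided sequence `x`. -/
def factorAt (x : ℤ → A) (m : ℤ) (len : ℕ) : List A :=
  (List.range len).map fun i => x (m + (i : ℤ))

/-- Extension of a morphism (given on letters) to finite words. -/
def wordImage (τ : A → List B) (w : List A) : List B := (w.map τ).flatten

/-- Composition of two morphisms. -/
def morphComp (σ : B → List C) (τ : A → List B) : A → List C :=
  fun a => wordImage σ (τ a)

/-- A morphism is non-erasing if no letter is sent to the empty word. -/
def NonErasing (τ : A → List B) : Prop := ∀ a, τ a ≠ []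

/-- A morphism is positive if every target letter occurs in the image of each letter. -/
def PositiveMorph (τ : A → List B) : Prop := ∀ a : A, ∀ b : B, b ∈ τ a

/-- A morphism is proper if all images start with the same letter and end with the same letter. -/
def ProperMorph (τ : A → List B) : Prop :=
  ∃ b b' : B, ∀ a : A, (τ a).head? = some b ∧ (τ a).getLast? = some b'

/-- Cumulative lengths of the images `τ(y_0 ⋯ y_{n-1})` (or the negative part for `n < 0`). -/
def cumLen (τ : A → List B) (y : ℤ → A) (n : ℤ) : ℤ :=
  if 0 ≤ n then ∑ i ∈ Finset.range n.toNat, ((τ (y (i : ℤ))).length : ℤ)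
  else -∑ i ∈ Finset.range (-n).toNat, ((τ (y (-(i : ℤ) - 1))).length : ℤ)

/-- `z` is the two-sided concatenation of the images of the letters of `y` under `τ`,
the image of the 0-th coordinate starting at coordinate 0. -/
def IsSeqImage (τ : A → List B) (y : ℤ → A) (z : ℤ → B) : Prop :=
  ∀ (n : ℤ) (j : Fin (τ (y n)).length), z (cumLen τ y n + ((j : ℕ) : ℤ)) = (τ (y n)).get j

/-- `(k, y)` is a centered `τ`-representation of `x` in `Y`. -/
def IsCenteredRep (τ : A → List B) (Y : Set (ℤ → A)) (x : ℤ → B) (k : ℕ) (y : ℤ → A) : Prop :=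
  y ∈ Y ∧ k < (τ (y 0)).length ∧ ∃ z, IsSeqImage τ y z ∧ x = shiftBy (k : ℤ) z

/-- `τ` is recognizable in `Y`: every point has at most one centered `τ`-representation in `Y`. -/
def RecognizableIn (τ : A → List B) (Y : Set (ℤ → A)) : Prop :=
  ∀ (x : ℤ → B) (k k' : ℕ) (y y' : ℤ → A),
    IsCenteredRep τ Y x k y → IsCenteredRep τ Y x k' y' → k = k' ∧ y = y'

/-- A two-sided sequence is aperiodic for the shift. -/
def AperiodicPoint (x : ℤ → A) : Prop := ∀ k : ℤ, k ≠ 0 → shiftBy k x ≠ x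

/-- `τ` is recognizable in `Y` for aperiodic points. -/
def RecognizableInForAperiodic (τ : A → List B) (Y : Set (ℤ → A)) : Prop :=
  ∀ (x : ℤ → B) (k k' : ℕ) (y y' : ℤ → A), AperiodicPoint x →
    IsCenteredRep τ Y x k y → IsCenteredRep τ Y x k' y' → k = k' ∧ y = y'

/-- A subshift: a closed shift-invariant subset of `A^ℤ`. -/
def IsSubshift [TopologicalSpace A] (X : Set (ℤ → A)) : Prop :=
  IsClosed X ∧ ∀ k : ℤ, ∀ x ∈ X, shiftBy k x ∈ X

/-- A minimal subshift: nonempty and every orbit is dense in it. -/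
def MinimalSubshift [TopologicalSpace A] (X : Set (ℤ → A)) : Prop :=
  IsSubshift X ∧ X.Nonempty ∧ ∀ x ∈ X, X ⊆ closure {z | ∃ k : ℤ, z = shiftBy k x}

/-- `X` is the smallest subshift containing `τ(Y)`. -/
def IsSmallestSubshiftContaining [TopologicalSpace B] (τ : A → List B)
    (Y : Set (ℤ → A)) (X : Set (ℤ → B)) : Prop :=
  IsSubshift X ∧ (∀ y ∈ Y, ∀ z, IsSeqImage τ y z → z ∈ X) ∧
    ∀ X' : Set (ℤ → B), IsSubshift X' → (∀ y ∈ Y, ∀ z, IsSeqImage τ y z → z ∈ X') → X ⊆ X'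

/-- The language of a subshift. -/
def langOf (X : Set (ℤ → A)) : Set (List A) :=
  {w | ∃ x ∈ X, ∃ m : ℤ, factorAt x m w.length = w}

/-- The complexity function of a subshift. -/
noncomputable def complexity (X : Set (ℤ → A)) (n : ℕ) : ℕ :=
  Set.ncard {w : List A | w.length = n ∧ w ∈ langOf X}

/-- `‖τ‖`, the maximal length of the image of a letter. -/
noncomputable def normSup (τ : A → List B) : ℕ := sSup (Set.range fun a => (τ a).length)

/-- `⟨τ⟩`, the minimal length of the image of a letter. -/
noncomputable def normInf (τ : A → List B) : ℕ := sInf (Set.range fun a => (τ a).length)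

/-- The language of `θ(A^ℤ)`: finite words occurring in two-sided images under `θ`. -/
def morphLang (θ : A → List C) : Set (List C) :=
  {w | ∃ (x : ℤ → A) (z : ℤ → C) (m : ℤ), IsSeqImage θ x z ∧ factorAt z m w.length = w}

/-- `p_{θ(A^ℤ)}(n)`: number of words of length `n` occurring in two-sided images under `θ`. -/
noncomputable def morphComplexity (θ : A → List C) (n : ℕ) : ℕ :=
  Set.ncard {w : List C | w.length = n ∧ w ∈ morphLang θ}

/-- The set `F(b, n, σ, L)` of right extensions of `b` in `L`. -/
def Fset (σ : B → List C) (b : B) (n : ℕ) (L : Set (List B)) : Set (List B) :=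
  {w | w ∈ L ∧ (b :: w) ∈ L ∧ w.head? ≠ some b ∧
    (wordImage σ w.dropLast).length < n ∧ n ≤ (wordImage σ w).length}

/-- `τ(A^i)`: images under `τ` of words of length `i`. -/
def imagesOfLen (τ : A → List B) (i : ℕ) : Set (List B) :=
  {w | ∃ u : List A, u.length = i ∧ wordImage τ u = w}

/-- `Comp_i(σ|τ)(n)`, the `i`-th complexity of `σ` with respect to `τ`. -/
noncomputable def relCompI [Fintype B] (σ : B → List C) (τ : A → List B) (i n : ℕ) : ℕ :=
  ∑ b : B, (Fset σ b n (imagesOfLen τ i)).ncard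

/-- `Comp(σ|τ)(n)`, the complexity of `σ` with respect to `τ`. -/
noncomputable def relComp [Fintype B] (σ : B → List C) (τ : A → List B) (n : ℕ) : ℕ :=
  ∑ b : B, (Fset σ b n (morphLang τ)).ncard

/-- Number of maximal blocks of a single repeated letter in a word. -/
def blockCount [DecidableEq B] : List B → ℕ
  | [] => 0
  | [_] => 1
  | a :: b :: l => (if a = b then 0 else 1) + blockCount (b :: l)

/-- The repetition complexity `r-comp(τ)` of a morphism. -/
noncomputable def rcomp [Fintype A] [DecidableEq B] (τ : A → List B) : ℕ :=
  ∑ a : A, blockCount (τ a)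

/-- Two two-sided sequences are left asymptotic. -/
def LeftAsymptotic (x y : ℤ → A) : Prop :=
  ∃ N : ℕ, ∀ k : ℕ, N ≤ k → x (-(k : ℤ)) = y (-(k : ℤ))

/-- The shift orbits of `x` and `y` are asymptotic. -/
def OrbitsAsymptotic (x y : ℤ → A) : Prop :=
  ∃ k k' : ℤ, LeftAsymptotic (shiftBy k x) (shiftBy k' y)

/-- A finite set `W` of non-empty words is recognizable in the subshift `X`. -/
def WordSetRecognizable [TopologicalSpace B] (W : Set (List B)) (X : Set (ℤ → B)) : Prop :=
  ∃ (A' : Type) (_ : Fintype A') (Y : Set (ℤ → A')) (τ : A' → List B),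
    Set.range τ = W ∧ NonErasing τ ∧ (@IsSubshift A' ⊥ Y) ∧
    IsSmallestSubshiftContaining τ Y X ∧ RecognizableIn τ Y

end Defs

section Seq

variable {A : ℕ → Type*}

/-- `τ_{[0,n]} = τ_0 ∘ τ_1 ∘ ⋯ ∘ τ_n`. -/
def compSeq (τ : ∀ n, A (n+1) → List (A n)) : ∀ n, A (n+1) → List (A 0)
  | 0 => τ 0
  | n+1 => fun a => wordImage (compSeq τ n) (τ (n+1) a)

/-- `τ_{[n, n+k]} = τ_n ∘ ⋯ ∘ τ_{n+k}`. -/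
def compFrom (τ : ∀ n, A (n+1) → List (A n)) (n : ℕ) : ∀ k, A (n+k+1) → List (A n)
  | 0 => τ n
  | k+1 => fun a => wordImage (compFrom τ n k) (τ (n+k+1) a)

/-- The S-adic subshift generated by the directive sequence `τ`. -/
def sadicSubshift (τ : ∀ n, A (n+1) → List (A n)) : Set (ℤ → A 0) :=
  {x | ∀ (m : ℤ) (len : ℕ), ∃ (n : ℕ) (a : A (n+1)), factorAt x m len <:+: compSeq τ n a}

/-- The level-`n` subshift `X_τ^{(n)}` of the directive sequence `τ`. -/
def levelSubshift (τ : ∀ n, A (n+1) → List (A n)) (n : ℕ) : Set (ℤ → A n) :=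
  {x | ∀ (m : ℤ) (len : ℕ), ∃ (k : ℕ) (a : A (n+k+1)), factorAt x m len <:+: compFrom τ n k a}

end Seq

private lemma stmt0_key {α : Type*} (A B : List α) (hA : A ≠ []) (k : ℕ)
    (hk : k < A.length + B.length)
    (hagree : ∀ i < k, (A ++ B)[i]? = (B ++ A)[i]?) :
    ∀ l : List (List α), (∀ w ∈ l, w = A ∨ w = B) →
      ∀ i, i ≤ k → i < (A ++ l.flatten).length →
        (A ++ l.flatten)[i]? = (A ++ B)[i]? := by
  have hA0 : 0 < A.length := List.length_pos_iff.mpr hA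
  intro l
  induction l with
  | nil =>
    intro _ i hik hilen
    simp only [List.flatten_nil, List.append_nil] at hilen ⊢
    rw [List.getElem?_append_left hilen]
  | cons w l ih =>
    intro hmem i hik hilen
    rcases hmem w List.mem_cons_self with hw | hw
    · -- w = A
      rw [hw] at hilen ⊢; clear hw
      by_cases hiA : i < A.length
      · rw [List.getElem?_append_left, List.getElem?_append_left hiA]
        simpa using hiA
      · push_neg at hiA
        set j := i - A.length with hj
        have hji : j < i := by omega
        have hjk : j < k := by omega
        have hjB : j < B.length := by omega
        have hflat : (A :: l).flatten = A ++ l.flatten := by simp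
        rw [hflat] at hilen ⊢
        have hjlen : j < (A ++ l.flatten).length := by
          simp only [List.length_append] at hilen ⊢
          omega
        calc (A ++ (A ++ l.flatten))[i]? = (A ++ l.flatten)[j]? :=
              List.getElem?_append_right hiA
          _ = (A ++ B)[j]? := ih (fun w hw => hmem w (List.mem_cons_of_mem _ hw)) j hjk.le hjlen
          _ = (B ++ A)[j]? := hagree j hjk
          _ = B[j]? := List.getElem?_append_left hjB
          _ = (A ++ B)[i]? := (List.getElem?_append_right hiA).symm
    · -- w = B
      rw [hw] at hilen ⊢; clear hw
      have hflat : A ++ (B :: l).flatten = (A ++ B) ++ l.flatten := by simp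
      rw [hflat]
      exact List.getElem?_append_left (by simp; omega)

/-- a Fine–Wilf-type separation lemma (Lemma `lem:prefix` variant). -/
theorem stmt0 {α : Type*} [Fintype α] (A B : List α) (hA : A ≠ []) (hB : B ≠ [])
    (hAB : A ++ B ≠ B ++ A) :
    ∃ u : List α, u.length < A.length + B.length ∧
      ∀ x y : List α,
        (∃ l : List (List α), (∀ w ∈ l, w = A ∨ w = B) ∧ x = A ++ l.flatten) →
        (∃ l : List (List α), (∀ w ∈ l, w = A ∨ w = B) ∧ y = B ++ l.flatten) →
        (u.length ≤ x.length → u <+: x) ∧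
        (u.length ≤ y.length → u <+: y) ∧
        (∀ (hx : u.length < x.length) (hy : u.length < y.length),
          x[u.length]'hx ≠ y[u.length]'hy) := by
  classical
  have hex : ∃ i : ℕ, (A ++ B)[i]? ≠ (B ++ A)[i]? := by
    by_contra h
    push_neg at h
    exact hAB (List.ext_getElem? h)
  set k := Nat.find hex with hkdef
  have hP : (A ++ B)[k]? ≠ (B ++ A)[k]? := Nat.find_spec hex
  have hagree : ∀ i < k, (A ++ B)[i]? = (B ++ A)[i]? := fun i hi => by
    have := Nat.find_min hex hi
    simpa using this
  have hklt : k < A.length + B.length := by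
    by_contra h
    push_neg at h
    apply hP
    rw [List.getElem?_eq_none (by simp; omega), List.getElem?_eq_none (by simp; omega)]
  refine ⟨(A ++ B).take k, ?_, ?_⟩
  · simpa using by omega
  have hulen : ((A ++ B).take k).length = k := by simp; omega
  have hagree' : ∀ i < k, (B ++ A)[i]? = (A ++ B)[i]? := fun i hi => (hagree i hi).symm
  rintro x y ⟨lx, hlx, rfl⟩ ⟨ly, hly, rfl⟩
  set x := A ++ lx.flatten with hxdef
  set y := B ++ ly.flatten with hydef
  have keyx : ∀ i, i ≤ k → i < x.length → x[i]? = (A ++ B)[i]? :=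
    stmt0_key A B hA k hklt hagree lx hlx
  have keyy : ∀ i, i ≤ k → i < y.length → y[i]? = (B ++ A)[i]? :=
    stmt0_key B A hB k (by omega) hagree' ly (fun w hw => (hly w hw).symm)
  have pref : ∀ (z : List α) (C : List α),
      (∀ i, i ≤ k → i < z.length → z[i]? = C[i]?) →
      ((A ++ B).take k).length ≤ z.length → C.take k = (A ++ B).take k →
      (A ++ B).take k <+: z := by
    intro z C keyz hlz hCk
    rw [hulen] at hlz
    have : z.take k = (A ++ B).take k := by
      rw [← hCk]
      apply List.ext_getElem?
      intro n
      by_cases hn : n < k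
      · rw [List.getElem?_take_of_lt hn, List.getElem?_take_of_lt hn]
        exact keyz n hn.le (by omega)
      · rw [List.getElem?_take_eq_none (by omega), List.getElem?_take_eq_none (by omega)]
    rw [← this]
    exact List.take_prefix _ _
  refine ⟨fun h => pref x (A ++ B) keyx h rfl, fun h => pref y (B ++ A) keyy h ?_, ?_⟩
  · apply List.ext_getElem?
    intro n
    by_cases hn : n < k
    · rw [List.getElem?_take_of_lt hn, List.getElem?_take_of_lt hn]
      exact hagree' n hn
    · rw [List.getElem?_take_eq_none (by omega), List.getElem?_take_eq_none (by omega)]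
  · intro hx hy hcon
    simp only [hulen] at hx hy hcon
    apply hP
    have h1 : (A ++ B)[k]? = some (x[k]'hx) := by
      rw [← keyx k le_rfl hx]; exact List.getElem?_eq_getElem hx
    have h2 : (B ++ A)[k]? = some (y[k]'hy) := by
      rw [← keyy k le_rfl hy]; exact List.getElem?_eq_getElem hy
    rw [h1, h2]
    exact congrArg some hcon
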